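/- Let α > 1 be a real number and let d : ℝ³ × ℝ³ → [0,∞) be a quasi-distance on ℝ³ that is left-invariant for the Heisenberg group law, self-similar (there exists λ₀ ∈ (0,1) with d(δ_{λ₀}(p), δ_{λ₀}(q)) = λ₀·d(p,q) for all p, q, where δ_λ(x,y,z) := (λx, λ^α y, λ^{α+1} z)), continuous on ℝ³ × ℝ³ for the standard topology, and such that (ℝ³, d) satisfies the Weak Besicovitch Covering Property. Then for every p = (x_p, y_p, z_p) ∈ ℝ³ with d(0,p) = 1 and x_p ≠ 0, and for every t ∈ [0,1], one has d(0, ((1−t)·x_p, y_p, z_p + t·x_p·y_p/2)) ≤ 1; that is, the segment σ̂_p := {((1−t)x_p, y_p, z_p + t·x_p·y_p/2) : t ∈ [0,1]} is contained in the unit ball B_d(0,1). -/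

import Mathlib

/-- The first Heisenberg group law on `ℝ³`. -/
noncomputable def hmul (p q : ℝ × ℝ × ℝ) : ℝ × ℝ × ℝ :=
  (p.1 + q.1, p.2.1 + q.2.1, p.2.2 + q.2.2 + (p.1 * q.2.1 - p.2.1 * q.1) / 2)

/-- The group inverse for the Heisenberg group law. -/
noncomputable def hinv (p : ℝ × ℝ × ℝ) : ℝ × ℝ × ℝ := (-p.1, -p.2.1, -p.2.2)

/-- The dilations of the non-standard grading of exponent `α` on the first Heisenberg
group: `δ_l(x,y,z) = (l·x, l^α·y, l^(α+1)·z)`. -/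
noncomputable def hdil (α l : ℝ) (p : ℝ × ℝ × ℝ) : ℝ × ℝ × ℝ :=
  (l * p.1, l ^ α * p.2.1, l ^ (α + 1) * p.2.2)

/-- The closed ball of center `p` and radius `r` for a distance-like function `d`. -/
def QBall {X : Type*} (d : X → X → ℝ) (p : X) (r : ℝ) : Set X := {q | d q p ≤ r}

/-- A quasi-distance. -/
def IsQuasiDist {X : Type*} (d : X → X → ℝ) : Prop :=
  (∀ p q, 0 ≤ d p q) ∧ (∀ p q, d p q = d q p) ∧ (∀ p q, d p q = 0 ↔ p = q) ∧
    ∃ C : ℝ, 1 ≤ C ∧ ∀ p p' q, d p q ≤ C * (d p p' + d p' q)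

/-- A family of Besicovitch balls. -/
def IsBesicovitchFamily {X : Type*} (d : X → X → ℝ) (s : Finset X) (r : X → ℝ) : Prop :=
  (∀ x ∈ s, 0 < r x) ∧ (∀ x ∈ s, ∀ y ∈ s, x ≠ y → x ∉ QBall d y (r y)) ∧
    ∃ z, ∀ x ∈ s, z ∈ QBall d x (r x)

/-- The Weak Besicovitch Covering Property. -/
def HasWBCP {X : Type*} (d : X → X → ℝ) : Prop :=
  ∃ Q : ℕ, 1 ≤ Q ∧ ∀ (s : Finset X) (r : X → ℝ), IsBesicovitchFamily d s r → s.card ≤ Q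

private lemma hmul_zero_right (a : ℝ × ℝ × ℝ) : hmul a 0 = a := by
  simp [hmul]

private lemma hmul_hinv_self (a : ℝ × ℝ × ℝ) : hmul a (hinv a) = 0 := by
  unfold hmul hinv
  refine Prod.ext ?_ (Prod.ext ?_ ?_) <;> simp <;> ring

private lemma hinv_hmul_self (a : ℝ × ℝ × ℝ) : hmul (hinv a) a = 0 := by
  unfold hmul hinv
  refine Prod.ext ?_ (Prod.ext ?_ ?_) <;> simp <;> ring

private lemma hinv_hinv' (a : ℝ × ℝ × ℝ) : hinv (hinv a) = a := by
  simp [hinv]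

private lemma hdil_zero (α l : ℝ) : hdil α l 0 = 0 := by
  simp [hdil]

private lemma hdil_one (α : ℝ) (u : ℝ × ℝ × ℝ) : hdil α 1 u = u := by
  simp [hdil, Real.one_rpow]

private lemma hdil_comp (α : ℝ) {a b : ℝ} (ha : 0 ≤ a) (hb : 0 ≤ b) (u : ℝ × ℝ × ℝ) :
    hdil α a (hdil α b u) = hdil α (a * b) u := by
  unfold hdil
  refine Prod.ext ?_ (Prod.ext ?_ ?_) <;> simp <;> (try rw [Real.mul_rpow ha hb]) <;> ring

private lemma hdil_hinv (α l : ℝ) (u : ℝ × ℝ × ℝ) : hdil α l (hinv u) = hinv (hdil α l u) := by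
  unfold hdil hinv
  refine Prod.ext ?_ (Prod.ext ?_ ?_) <;> simp

private lemma hdil_hmul (α : ℝ) {l : ℝ} (hl : 0 < l) (u v : ℝ × ℝ × ℝ) :
    hmul (hdil α l u) (hdil α l v) = hdil α l (hmul u v) := by
  have h1 : l ^ (α + 1) = l ^ α * l := by
    rw [Real.rpow_add hl, Real.rpow_one]
  unfold hmul hdil
  refine Prod.ext ?_ (Prod.ext ?_ ?_) <;> simp <;> (try rw [h1]) <;> ring

private lemma conj_id (α : ℝ) (x y z s0 b0 c0 : ℝ) {ν : ℝ} (hν : 0 < ν) :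
    hmul ((1 - s0) * x, y + b0, z + s0 * x * y / 2 + c0 + (1 - s0) * x * b0 / 2)
      (hdil α ν (hinv ((1 - s0) * x, y + b0, z + s0 * x * y / 2 + c0 + (1 - s0) * x * b0 / 2)))
    = ((1 - (s0 + ν * (1 - s0))) * x,
       y + (b0 + ν ^ α * (-b0 - y)),
       z + (s0 + ν * (1 - s0)) * x * y / 2
         + (c0 + ν * (1 - s0) * x * b0 + ν ^ (α + 1) * (-c0 - (1 - s0) * x * b0 - z - x * y / 2))
         + (1 - (s0 + ν * (1 - s0))) * x * (b0 + ν ^ α * (-b0 - y)) / 2) := by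
  have h1 : ν ^ (α + 1) = ν ^ α * ν := by
    rw [Real.rpow_add hν, Real.rpow_one]
  unfold hmul hdil hinv
  refine Prod.ext ?_ (Prod.ext ?_ ?_) <;> simp <;> (try rw [h1]) <;> ring


set_option maxHeartbeats 2000000 in
/-- Under the hypotheses of Theorem 6.7 (continuous self-similar quasi-distance on the
non-standard Heisenberg group of exponent `α > 1` satisfying WBCP), for every
`p = (x_p, y_p, z_p)` on the unit sphere with `x_p ≠ 0`, the segment
`σ̂_p = {((1−t)x_p, y_p, z_p + t·x_p·y_p/2) : t ∈ [0,1]}` is contained in the unit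
ball. -/
theorem statement19 (α : ℝ) (hα : 1 < α)
    (d : (ℝ × ℝ × ℝ) → (ℝ × ℝ × ℝ) → ℝ)
    (hd : IsQuasiDist d)
    (hinvL : ∀ p q q', d (hmul p q) (hmul p q') = d q q')
    (hss : ∃ l₀ : ℝ, 0 < l₀ ∧ l₀ < 1 ∧
      ∀ p q, d (hdil α l₀ p) (hdil α l₀ q) = l₀ * d p q)
    (hcont : Continuous (fun pq : (ℝ × ℝ × ℝ) × (ℝ × ℝ × ℝ) => d pq.1 pq.2))
    (hwbcp : HasWBCP d) :
    ∀ p : ℝ × ℝ × ℝ, d 0 p = 1 → p.1 ≠ 0 →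
      ∀ t ∈ Set.Icc (0 : ℝ) 1,
        d 0 ((1 - t) * p.1, p.2.1, p.2.2 + t * (p.1 * p.2.1) / 2) ≤ 1 := by
  obtain ⟨hpos, hsym, hzero, _C, _hC, _htri⟩ := hd
  obtain ⟨lam, hl0, hl1, hsim⟩ := hss
  obtain ⟨Q, hQ1, hQb⟩ := hwbcp
  have hd0inv : ∀ u : ℝ × ℝ × ℝ, d 0 (hinv u) = d 0 u := by
    intro u
    have h := hinvL u 0 (hinv u)
    rw [hmul_zero_right, hmul_hinv_self] at h
    rw [← h, hsym]
  have hdleft : ∀ a b : ℝ × ℝ × ℝ, d a b = d 0 (hmul (hinv a) b) := by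
    intro a b
    have h := hinvL (hinv a) a b
    rw [hinv_hmul_self] at h
    exact h.symm
  have hscale : ∀ (m : ℕ) (u : ℝ × ℝ × ℝ), d 0 (hdil α (lam ^ m) u) = lam ^ m * d 0 u := by
    intro m
    induction m with
    | zero => intro u; simp [hdil_one]
    | succ m ih =>
      intro u
      have hcmp : hdil α (lam ^ (m + 1)) u = hdil α lam (hdil α (lam ^ m) u) := by
        rw [hdil_comp α hl0.le (pow_nonneg hl0.le m), pow_succ, mul_comm]
      rw [hcmp]
      have h := hsim 0 (hdil α (lam ^ m) u)
      rw [hdil_zero] at h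
      rw [h, ih u, pow_succ]
      ring
  intro p hp hx
  obtain ⟨x, y, z⟩ := p
  simp only at hx
  have core : ∀ tb : ℝ, 0 < tb → tb < 1 →
      1 < d 0 ((1 - tb) * x, y, z + tb * (x * y) / 2) → False := by
    intro tb htb0 htb1 hbump
    set Psi : ℝ × ℝ × ℝ → ℝ := fun v => d 0
      ((1 - v.1) * x, y + v.2.1, z + v.1 * x * y / 2 + v.2.2 + (1 - v.1) * x * v.2.1 / 2)
      with hPsi
    have hPsieval : ∀ s b c : ℝ, Psi (s, b, c) =
        d 0 ((1 - s) * x, y + b, z + s * x * y / 2 + c + (1 - s) * x * b / 2) := by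
      intro s b c; rfl
    have hPsicont : Continuous Psi := by
      rw [hPsi]
      have hW : Continuous (fun v : ℝ × ℝ × ℝ =>
          (((1 - v.1) * x, y + v.2.1, z + v.1 * x * y / 2 + v.2.2 + (1 - v.1) * x * v.2.1 / 2)
            : ℝ × ℝ × ℝ)) := by fun_prop
      exact hcont.comp (continuous_const.prodMk hW)
    have hbump' : 1 < Psi (tb, 0, 0) := by
      rw [hPsieval]
      have he : ((1 - tb) * x, y + 0, z + tb * x * y / 2 + 0 + (1 - tb) * x * 0 / 2)
          = (((1 - tb) * x, y, z + tb * (x * y) / 2) : ℝ × ℝ × ℝ) := by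
        refine Prod.ext (by ring) (Prod.ext (by ring) (by ring))
      rw [he]
      exact hbump
    set clev : ℝ := (1 + Psi (tb, 0, 0)) / 2 with hclev
    have hclev1 : 1 < clev := by rw [hclev]; linarith
    have hclev2 : clev < Psi (tb, 0, 0) := by rw [hclev]; linarith
    have hclev0 : 0 ≤ clev := by linarith
    have hopen : IsOpen {v : ℝ × ℝ × ℝ | clev < Psi v} :=
      isOpen_lt continuous_const hPsicont
    obtain ⟨ε, hε, hball⟩ := Metric.isOpen_iff.1 hopen (tb, 0, 0) hclev2
    set th : ℝ := min (ε / 2) (tb / 2) with hth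
    have hth0 : 0 < th := lt_min (by linarith) (by linarith)
    have hthε : th < ε := lt_of_le_of_lt (min_le_left _ _) (by linarith)
    have hthtb : th ≤ tb / 2 := min_le_right _ _
    have hbox : ∀ v : ℝ × ℝ × ℝ, |v.1 - tb| ≤ th → |v.2.1| ≤ th → |v.2.2| ≤ th →
        clev < Psi v := by
      intro v h1 h2 h3
      apply hball
      rw [Metric.mem_ball]
      have hd1 : dist v (tb, 0, 0) ≤ th := by
        rw [Prod.dist_eq]
        apply max_le
        · rw [Real.dist_eq]; exact h1
        · rw [Prod.dist_eq]
          apply max_le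
          · rw [Real.dist_eq]; simpa using h2
          · rw [Real.dist_eq]; simpa using h3
      linarith
    set K : ℝ := 1 + 2 * |x| with hK
    have hK1 : 1 ≤ K := by rw [hK]; linarith [abs_nonneg x]
    have hK0 : 0 ≤ K := by linarith
    set θ : ℝ := th / (2 * (1 + K)) with hθ
    have hθ0 : 0 < θ := by
      apply div_pos hth0
      positivity
    have hθK : θ * (1 + K) = th / 2 := by
      rw [hθ]
      field_simp
    have hθ2 : θ * 2 ≤ th := by
      have h1 : θ * 2 ≤ θ * (1 + K) := mul_le_mul_of_nonneg_left (by linarith) hθ0.le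
      rw [hθK] at h1
      linarith
    have hθKth : θ * (1 + K) ≤ th := by rw [hθK]; linarith
    set SS : Set (ℝ × ℝ × ℝ) := {v | 0 ≤ v.1 ∧ v.1 ≤ tb ∧ |v.2.1| ≤ θ * (1 + v.1) ∧
      |v.2.2| ≤ θ * (1 + K * v.1) ∧ Psi v ≤ clev} with hSS
    have hmem0 : ((0, 0, 0) : ℝ × ℝ × ℝ) ∈ SS := by
      refine ⟨le_refl _, htb0.le, ?_, ?_, ?_⟩
      · show |(0:ℝ)| ≤ θ * (1 + 0); simp; linarith
      · show |(0:ℝ)| ≤ θ * (1 + K * 0)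
        rw [abs_zero]
        have : (0:ℝ) ≤ θ * (1 + K * 0) := by
          apply mul_nonneg hθ0.le
          linarith [mul_nonneg hK0 (le_refl (0:ℝ))]
        exact this
      · show Psi (0, 0, 0) ≤ clev
        rw [hPsieval]
        have he : ((1 - 0) * x, y + 0, z + 0 * x * y / 2 + 0 + (1 - 0) * x * 0 / 2)
            = ((x, y, z) : ℝ × ℝ × ℝ) := by
          refine Prod.ext (by ring) (Prod.ext (by ring) (by ring))
        rw [he, hp]
        linarith
    have hclosed : IsClosed SS := by
      have c1 : Continuous (fun v : ℝ × ℝ × ℝ => v.1) := continuous_fst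
      have c2 : Continuous (fun v : ℝ × ℝ × ℝ => v.2.1) := continuous_fst.comp continuous_snd
      have c3 : Continuous (fun v : ℝ × ℝ × ℝ => v.2.2) := continuous_snd.comp continuous_snd
      have hre : SS = {v : ℝ × ℝ × ℝ | 0 ≤ v.1} ∩ ({v | v.1 ≤ tb} ∩
          ({v | |v.2.1| ≤ θ * (1 + v.1)} ∩
          ({v | |v.2.2| ≤ θ * (1 + K * v.1)} ∩ {v | Psi v ≤ clev}))) := by
        ext v
        simp only [hSS, Set.mem_setOf_eq, Set.mem_inter_iff]
        try tauto
      rw [hre]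
      refine IsClosed.inter ?_ (IsClosed.inter ?_ (IsClosed.inter ?_ (IsClosed.inter ?_ ?_)))
      · exact isClosed_le continuous_const c1
      · exact isClosed_le c1 continuous_const
      · exact isClosed_le c2.abs (by fun_prop)
      · exact isClosed_le c3.abs (by fun_prop)
      · exact isClosed_le hPsicont continuous_const
    have hbdd : SS ⊆ Set.Icc ((0 : ℝ), -(θ * 2), -(θ * (1 + K)))
        ((tb : ℝ), θ * 2, θ * (1 + K)) := by
      rintro v ⟨h1, h2, h3, h4, -⟩
      have hv1 : v.1 ≤ 1 := le_trans h2 htb1.le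
      have h3' : |v.2.1| ≤ θ * 2 := by
        refine le_trans h3 (mul_le_mul_of_nonneg_left (by linarith) hθ0.le)
      have h4' : |v.2.2| ≤ θ * (1 + K) := by
        refine le_trans h4 (mul_le_mul_of_nonneg_left ?_ hθ0.le)
        have := mul_le_mul_of_nonneg_left hv1 hK0
        linarith
      rw [Set.mem_Icc]
      exact ⟨⟨h1, (abs_le.1 h3').1, (abs_le.1 h4').1⟩, ⟨h2, (abs_le.1 h3').2, (abs_le.1 h4').2⟩⟩
    have hcomp : IsCompact SS := IsCompact.of_isClosed_subset isCompact_Icc hclosed hbdd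
    obtain ⟨v0, hv0S, hv0max⟩ := hcomp.exists_isMaxOn ⟨_, hmem0⟩ continuous_fst.continuousOn
    have hv0max' : ∀ v ∈ SS, v.1 ≤ v0.1 := isMaxOn_iff.mp hv0max
    obtain ⟨s0, b0, c0⟩ := v0
    obtain ⟨hs00, hs0tb, hb0, hc0, hPsi0⟩ := hv0S
    simp only at hs00 hs0tb hb0 hc0 hPsi0 hv0max'
    have hs0th : s0 ≤ tb - th := by
      by_contra hcon
      push_neg at hcon
      have hs01' : s0 ≤ 1 := by linarith
      have h1 : |s0 - tb| ≤ th := by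
        rw [abs_le]; constructor <;> linarith
      have h2 : |b0| ≤ th := by
        refine le_trans hb0 (le_trans (mul_le_mul_of_nonneg_left (by linarith) hθ0.le) hθ2)
      have h3 : |c0| ≤ th := by
        refine le_trans hc0 (le_trans (mul_le_mul_of_nonneg_left ?_ hθ0.le) hθKth)
        have := mul_le_mul_of_nonneg_left hs01' hK0
        linarith
      have := hbox (s0, b0, c0) h1 h2 h3
      linarith
    have hs01 : s0 < 1 := by linarith
    have hstrict : ∀ v : ℝ × ℝ × ℝ, s0 < v.1 → v.1 ≤ tb → |v.2.1| ≤ θ * (1 + v.1) →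
        |v.2.2| ≤ θ * (1 + K * v.1) → clev < Psi v := by
      intro v hv1 hv2 hv3 hv4
      by_contra hcon
      push_neg at hcon
      have hvS : v ∈ SS := ⟨by linarith, hv2, hv3, hv4, hcon⟩
      have := hv0max' v hvS
      linarith
    set M : ℝ × ℝ × ℝ :=
      ((1 - s0) * x, y + b0, z + s0 * x * y / 2 + c0 + (1 - s0) * x * b0 / 2) with hM
    have hMPsi : d 0 M = Psi (s0, b0, c0) := by rw [hPsieval]
    set m0 : ℝ := d 0 M with hm0def
    have hm0 : m0 ≤ clev := by rw [hMPsi]; exact hPsi0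
    have hm0pos : 0 < m0 := by
      rcases lt_or_eq_of_le (hpos 0 M) with h | h
      · exact h
      · exfalso
        have hzM : (0 : ℝ × ℝ × ℝ) = M := (hzero 0 M).1 h.symm
        have hM1 : ((0 : ℝ × ℝ × ℝ)).1 = (1 - s0) * x := by rw [hzM, hM]
        simp only [Prod.fst_zero] at hM1
        have : (1 - s0) * x ≠ 0 := mul_ne_zero (by linarith) hx
        exact this hM1.symm
    set btil : ℝ := -b0 - y with hbtil
    set ctil : ℝ := -c0 - (1 - s0) * x * b0 - z - x * y / 2 with hctil
    have hrpow_conv : ∀ (β : ℝ) (m : ℕ) (e : ℝ), 0 < β → ((β ^ m : ℝ)) ^ e = (β ^ e) ^ m := by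
      intro β m e hβ
      rw [← Real.rpow_natCast β m, ← Real.rpow_mul hβ.le, mul_comm,
        Real.rpow_mul hβ.le, Real.rpow_natCast]
    have hκ : 0 < 1 - tb := by linarith
    obtain ⟨n, hn1, hnA, hnB, hnC⟩ : ∃ n : ℕ, 1 ≤ n ∧ (lam ^ n : ℝ) ≤ th ∧
        ((lam ^ n : ℝ)) ^ (α - 1) * |btil| ≤ θ * (1 - tb) ∧
        ((lam ^ n : ℝ)) ^ α * |ctil| ≤ θ * (1 - tb) := by
      have hβ1 : lam ^ (α - 1) < 1 := Real.rpow_lt_one hl0.le hl1 (by linarith)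
      have hβ1' : (0:ℝ) < lam ^ (α - 1) := Real.rpow_pos_of_pos hl0 _
      have hβ2 : lam ^ α < 1 := Real.rpow_lt_one hl0.le hl1 (by linarith)
      have hβ2' : (0:ℝ) < lam ^ α := Real.rpow_pos_of_pos hl0 _
      obtain ⟨n1, hn1'⟩ := exists_pow_lt_of_lt_one hth0 hl1
      obtain ⟨n2, hn2'⟩ := exists_pow_lt_of_lt_one
        (show (0:ℝ) < θ * (1 - tb) / (|btil| + 1) by positivity) hβ1
      obtain ⟨n3, hn3'⟩ := exists_pow_lt_of_lt_one
        (show (0:ℝ) < θ * (1 - tb) / (|ctil| + 1) by positivity) hβ2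
      set N : ℕ := max 1 (max n1 (max n2 n3)) with hN
      refine ⟨N, le_max_left _ _, ?_, ?_, ?_⟩
      · refine le_trans (pow_le_pow_of_le_one hl0.le hl1.le ?_) hn1'.le
        exact le_trans (le_max_left n1 _) (le_max_right 1 _)
      · rw [hrpow_conv lam N (α - 1) hl0]
        have hle : (lam ^ (α - 1)) ^ N ≤ (lam ^ (α - 1)) ^ n2 := by
          refine pow_le_pow_of_le_one hβ1'.le hβ1.le ?_
          exact le_trans (le_trans (le_max_left n2 n3) (le_max_right n1 _)) (le_max_right 1 _)
        have h2 : (lam ^ (α - 1)) ^ N ≤ θ * (1 - tb) / (|btil| + 1) := le_trans hle hn2'.le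
        have hb : (0:ℝ) ≤ |btil| := abs_nonneg _
        have h3 : (lam ^ (α - 1)) ^ N * |btil| ≤ θ * (1 - tb) / (|btil| + 1) * |btil| :=
          mul_le_mul_of_nonneg_right h2 hb
        have h4 : θ * (1 - tb) / (|btil| + 1) * |btil| ≤ θ * (1 - tb) := by
          rw [div_mul_eq_mul_div, div_le_iff₀ (by positivity)]
          have := mul_le_mul_of_nonneg_left
            (show |btil| ≤ |btil| + 1 by linarith) (by positivity : (0:ℝ) ≤ θ * (1 - tb))
          linarith
        linarith
      · rw [hrpow_conv lam N α hl0]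
        have hle : (lam ^ α) ^ N ≤ (lam ^ α) ^ n3 := by
          refine pow_le_pow_of_le_one hβ2'.le hβ2.le ?_
          exact le_trans (le_trans (le_max_right n2 n3) (le_max_right n1 _)) (le_max_right 1 _)
        have h2 : (lam ^ α) ^ N ≤ θ * (1 - tb) / (|ctil| + 1) := le_trans hle hn3'.le
        have hb : (0:ℝ) ≤ |ctil| := abs_nonneg _
        have h3 : (lam ^ α) ^ N * |ctil| ≤ θ * (1 - tb) / (|ctil| + 1) * |ctil| :=
          mul_le_mul_of_nonneg_right h2 hb
        have h4 : θ * (1 - tb) / (|ctil| + 1) * |ctil| ≤ θ * (1 - tb) := by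
          rw [div_mul_eq_mul_div, div_le_iff₀ (by positivity)]
          have := mul_le_mul_of_nonneg_left
            (show |ctil| ≤ |ctil| + 1 by linarith) (by positivity : (0:ℝ) ≤ θ * (1 - tb))
          linarith
        linarith
    have key : ∀ ν : ℝ, 0 < ν → ν ≤ lam ^ n →
        clev < d 0 (hmul M (hdil α ν (hinv M))) := by
      intro ν hν hνn
      have hν1 : ν ≤ 1 := le_trans hνn (pow_le_one₀ hl0.le hl1.le)
      have hid : hmul M (hdil α ν (hinv M)) =
          ((1 - (s0 + ν * (1 - s0))) * x,
           y + (b0 + ν ^ α * btil),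
           z + (s0 + ν * (1 - s0)) * x * y / 2
             + (c0 + ν * (1 - s0) * x * b0 + ν ^ (α + 1) * ctil)
             + (1 - (s0 + ν * (1 - s0))) * x * (b0 + ν ^ α * btil) / 2) := by
        rw [hM, hbtil, hctil]
        exact conj_id α x y z s0 b0 c0 hν
      set S : ℝ := s0 + ν * (1 - s0) with hSdef
      set B : ℝ := b0 + ν ^ α * btil with hBdef
      set C : ℝ := c0 + ν * (1 - s0) * x * b0 + ν ^ (α + 1) * ctil with hCdef
      have hPsiSBC : d 0 (hmul M (hdil α ν (hinv M))) = Psi (S, B, C) := by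
        rw [hid, hPsieval]
      have hναsplit : ν ^ α = ν ^ (α - 1) * ν := by
        nth_rewrite 1 [show α = (α - 1) + 1 by ring]
        rw [Real.rpow_add hν, Real.rpow_one]
      have hνα1split : ν ^ (α + 1) = ν ^ α * ν := by
        rw [Real.rpow_add hν, Real.rpow_one]
      have hmono1 : ν ^ (α - 1) ≤ ((lam ^ n : ℝ)) ^ (α - 1) :=
        Real.rpow_le_rpow hν.le hνn (by linarith)
      have hmono2 : ν ^ α ≤ ((lam ^ n : ℝ)) ^ α :=
        Real.rpow_le_rpow hν.le hνn (by linarith)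
      have hS1 : s0 < S := by
        rw [hSdef]
        have : 0 < ν * (1 - s0) := mul_pos hν (by linarith)
        linarith
      have hS2 : S ≤ tb := by
        have h1 : ν * (1 - s0) ≤ ν := by
          have := mul_le_mul_of_nonneg_left (show (1:ℝ) - s0 ≤ 1 by linarith) hν.le
          linarith
        have h2 : ν ≤ th := le_trans hνn hnA
        rw [hSdef]; linarith
      have hBabs : |B| ≤ θ * (1 + S) := by
      -- |B| ≤ |b0| + ν^α |btil| ≤ θ(1+s0) + θ(1-s0)ν = θ(1+S)
        have h1 : |B| ≤ |b0| + ν ^ α * |btil| := by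
          rw [hBdef]
          refine le_trans (abs_add_le _ _) ?_
          rw [abs_mul, abs_of_nonneg (Real.rpow_nonneg hν.le α)]
        have h2 : ν ^ α * |btil| ≤ θ * (1 - tb) * ν := by
          rw [hναsplit]
          have e1 : ν ^ (α - 1) * ν * |btil| = (ν ^ (α - 1) * |btil|) * ν := by ring
          rw [e1]
          have e2 : ν ^ (α - 1) * |btil| ≤ ((lam ^ n : ℝ)) ^ (α - 1) * |btil| :=
            mul_le_mul_of_nonneg_right hmono1 (abs_nonneg _)
          have e3 : (ν ^ (α - 1) * |btil|) * ν ≤ (θ * (1 - tb)) * ν :=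
            mul_le_mul_of_nonneg_right (le_trans e2 hnB) hν.le
          linarith
        have h3 : θ * (1 - tb) * ν ≤ θ * (1 - s0) * ν := by
          apply mul_le_mul_of_nonneg_right _ hν.le
          exact mul_le_mul_of_nonneg_left (by linarith) hθ0.le
        have h4 : θ * (1 + S) = θ * (1 + s0) + θ * (1 - s0) * ν := by
          rw [hSdef]; ring
        linarith
      have hCabs : |C| ≤ θ * (1 + K * S) := by
        have habs1 : |ν * (1 - s0) * x * b0| = ν * (1 - s0) * |x| * |b0| := by
          rw [abs_mul, abs_mul, abs_mul, abs_of_nonneg hν.le,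
            abs_of_nonneg (by linarith : (0:ℝ) ≤ 1 - s0)]
        have habs2 : |ν ^ (α + 1) * ctil| = ν ^ (α + 1) * |ctil| := by
          rw [abs_mul, abs_of_nonneg (Real.rpow_nonneg hν.le _)]
        have h1 : |C| ≤ |c0| + ν * (1 - s0) * |x| * |b0| + ν ^ (α + 1) * |ctil| := by
          rw [hCdef]
          refine le_trans (abs_add_le _ _) ?_
          rw [habs2]
          have := abs_add_le c0 (ν * (1 - s0) * x * b0)
          rw [habs1] at this
          linarith
        have h2 : ν ^ (α + 1) * |ctil| ≤ θ * (1 - tb) * ν := by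
          rw [hνα1split]
          have e1 : ν ^ α * ν * |ctil| = (ν ^ α * |ctil|) * ν := by ring
          rw [e1]
          have e2 : ν ^ α * |ctil| ≤ ((lam ^ n : ℝ)) ^ α * |ctil| :=
            mul_le_mul_of_nonneg_right hmono2 (abs_nonneg _)
          have e3 : (ν ^ α * |ctil|) * ν ≤ (θ * (1 - tb)) * ν :=
            mul_le_mul_of_nonneg_right (le_trans e2 hnC) hν.le
          linarith
        have h2' : θ * (1 - tb) * ν ≤ θ * (1 - s0) * ν := by
          apply mul_le_mul_of_nonneg_right _ hν.le
          exact mul_le_mul_of_nonneg_left (by linarith) hθ0.le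
        have h3 : ν * (1 - s0) * |x| * |b0| ≤ ν * (1 - s0) * |x| * (θ * (1 + s0)) := by
          have hnn : 0 ≤ ν * (1 - s0) * |x| := by
            apply mul_nonneg (mul_nonneg hν.le (by linarith)) (abs_nonneg _)
          exact mul_le_mul_of_nonneg_left hb0 hnn
        have h4 : ν * (1 - s0) * |x| * (θ * (1 + s0)) ≤ ν * (1 - s0) * (2 * |x|) * θ := by
          have h1s : 1 + s0 ≤ 2 := by linarith
          have hnn2 : (0:ℝ) ≤ ν * (1 - s0) * |x| * θ :=
            mul_nonneg (mul_nonneg (mul_nonneg hν.le (by linarith)) (abs_nonneg x)) hθ0.le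
          have e1 : ν * (1 - s0) * |x| * (θ * (1 + s0)) = (ν * (1 - s0) * |x| * θ) * (1 + s0) := by
            ring
          have e2 : ν * (1 - s0) * (2 * |x|) * θ = (ν * (1 - s0) * |x| * θ) * 2 := by
            ring
          rw [e1, e2]
          exact mul_le_mul_of_nonneg_left h1s hnn2
        have h5 : θ * (1 + K * S) = θ * (1 + K * s0) + ν * (1 - s0) * (2 * |x|) * θ
            + θ * (1 - s0) * ν := by
          rw [hSdef, hK]; ring
        linarith
      have hstr := hstrict (S, B, C) hS1 hS2 hBabs hCabs
      rw [hPsiSBC]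
      exact hstr
    set wc : ℕ → ℝ × ℝ × ℝ := fun k => hdil α (lam ^ (n * k)) (hinv M) with hwc
    have hd0wc : ∀ k, d 0 (wc k) = lam ^ (n * k) * m0 := by
      intro k
      rw [hwc]
      simp only
      rw [hscale (n * k) (hinv M), hd0inv]
    have hpair : ∀ k l : ℕ, k < l → lam ^ (n * k) * clev < d (wc k) (wc l) := by
      intro k l hkl
      have hnkl : n * k + n * (l - k) = n * l := by
        rw [← Nat.mul_add, Nat.add_sub_cancel' hkl.le]
      have hsplit : wc l = hdil α (lam ^ (n * k)) (hdil α (lam ^ (n * (l - k))) (hinv M)) := by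
        rw [hwc]
        simp only
        rw [hdil_comp α (pow_nonneg hl0.le _) (pow_nonneg hl0.le _), ← pow_add, hnkl]
      have hinvwk : hinv (wc k) = hdil α (lam ^ (n * k)) M := by
        rw [hwc]
        simp only
        rw [← hdil_hinv, hinv_hinv']
      rw [hdleft (wc k) (wc l), hinvwk, hsplit,
        hdil_hmul α (pow_pos hl0 _) M (hdil α (lam ^ (n * (l - k))) (hinv M)),
        hscale (n * k)]
      have hνpos : (0:ℝ) < lam ^ (n * (l - k)) := pow_pos hl0 _
      have hνle : (lam : ℝ) ^ (n * (l - k)) ≤ lam ^ n := by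
        apply pow_le_pow_of_le_one hl0.le hl1.le
        have h1 : 1 ≤ l - k := by omega
        calc n = n * 1 := by ring
          _ ≤ n * (l - k) := Nat.mul_le_mul_left n h1
      have hkey := key (lam ^ (n * (l - k))) hνpos hνle
      have hpw : (0:ℝ) < lam ^ (n * k) := pow_pos hl0 _
      exact mul_lt_mul_of_pos_left hkey hpw
    have hMinv1 : (hinv M).1 ≠ 0 := by
      rw [hM]
      show -((1 - s0) * x) ≠ 0
      simp only [neg_ne_zero]
      exact mul_ne_zero (by linarith) hx
    have hinj : Function.Injective wc := by
      intro a b hab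
      have h1 : (wc a).1 = (wc b).1 := by rw [hab]
      rw [hwc] at h1
      simp only [hdil] at h1
      have h2 : (lam : ℝ) ^ (n * a) = lam ^ (n * b) := mul_right_cancel₀ hMinv1 h1
      by_contra hne
      have hmono : ∀ i j : ℕ, i < j → (lam:ℝ) ^ (n * j) < lam ^ (n * i) := by
        intro i j hij
        apply pow_lt_pow_right_of_lt_one₀ hl0 hl1
        have h1' : i + 1 ≤ j := hij
        calc n * i < n * i + n := by omega
          _ = n * (i + 1) := by ring
          _ ≤ n * j := Nat.mul_le_mul_left n h1'
      rcases Nat.lt_or_ge a b with h | h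
      · exact absurd h2 (ne_of_gt (hmono a b h))
      · have hba : b < a := by omega
        exact absurd h2 (ne_of_lt (hmono b a hba))
    set fam : Finset (ℝ × ℝ × ℝ) := (Finset.range (Q + 1)).image wc with hfam
    have hcard : fam.card = Q + 1 := by
      rw [hfam, Finset.card_image_of_injective _ hinj, Finset.card_range]
    have hbes : IsBesicovitchFamily d fam (fun u => d 0 u) := by
      refine ⟨?_, ?_, ⟨0, ?_⟩⟩
      · intro u hu
        rw [hfam] at hu
        obtain ⟨k, -, rfl⟩ := Finset.mem_image.1 hu
        show 0 < d 0 (wc k)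
        rw [hd0wc]
        exact mul_pos (pow_pos hl0 _) hm0pos
      · intro u hu v hv huv
        rw [hfam] at hu hv
        obtain ⟨k, -, rfl⟩ := Finset.mem_image.1 hu
        obtain ⟨l, -, rfl⟩ := Finset.mem_image.1 hv
        simp only [QBall, Set.mem_setOf_eq, not_le]
        show d 0 (wc l) < d (wc k) (wc l)
        rw [hd0wc]
        rcases Nat.lt_or_ge k l with h | h
        · have h1 := hpair k l h
          have h2 : (lam:ℝ) ^ (n * l) ≤ lam ^ (n * k) := by
            apply pow_le_pow_of_le_one hl0.le hl1.le
            exact Nat.mul_le_mul_left n h.le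
          have h3 : (lam:ℝ) ^ (n * l) * m0 ≤ lam ^ (n * k) * m0 :=
            mul_le_mul_of_nonneg_right h2 hm0pos.le
          have h4 : (lam:ℝ) ^ (n * k) * m0 ≤ lam ^ (n * k) * clev :=
            mul_le_mul_of_nonneg_left hm0 (pow_pos hl0 _).le
          linarith
        · have hlk : l < k := by
            rcases Nat.lt_or_ge l k with h' | h'
            · exact h'
            · exfalso; exact huv (by rw [Nat.le_antisymm h h'])
          have h1 := hpair l k hlk
          have h4 : (lam:ℝ) ^ (n * l) * m0 ≤ lam ^ (n * l) * clev :=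
            mul_le_mul_of_nonneg_left hm0 (pow_pos hl0 _).le
          rw [hsym (wc k) (wc l)]
          linarith
      · intro u hu
        show (0 : ℝ × ℝ × ℝ) ∈ QBall d u (d 0 u)
        simp only [QBall, Set.mem_setOf_eq]
        exact le_refl _
    have hle := hQb fam (fun u => d 0 u) hbes
    rw [hcard] at hle
    omega
  intro t ht
  obtain ⟨ht0, ht1⟩ := ht
  by_contra hgt
  push_neg at hgt
  have hgt' : 1 < d 0 ((1 - t) * x, y, z + t * (x * y) / 2) := hgt
  rcases eq_or_lt_of_le ht0 with h0 | h0
  · rw [← h0] at hgt'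
    have he : ((1 - (0:ℝ)) * x, y, z + 0 * (x * y) / 2) = ((x, y, z) : ℝ × ℝ × ℝ) := by
      refine Prod.ext (by ring) (Prod.ext (by ring) (by ring))
    rw [he, hp] at hgt'
    linarith
  rcases lt_or_eq_of_le ht1 with h1 | h1
  · exact core t h0 h1 hgt'
  · set G : ℝ → ℝ := fun s => d 0 ((1 - s) * x, y, z + s * (x * y) / 2) with hG
    have hGcont : Continuous G := by
      rw [hG]
      have hW : Continuous (fun s : ℝ =>
          (((1 - s) * x, y, z + s * (x * y) / 2) : ℝ × ℝ × ℝ)) := by fun_prop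
      exact hcont.comp (continuous_const.prodMk hW)
    have hopen : IsOpen {s : ℝ | 1 < G s} := isOpen_lt continuous_const hGcont
    have hmem : (1:ℝ) ∈ {s : ℝ | 1 < G s} := by
      simp only [Set.mem_setOf_eq, hG]
      rw [← h1] at hgt' ⊢
      exact hgt'
    obtain ⟨ε, hε, hball⟩ := Metric.isOpen_iff.1 hopen 1 hmem
    set t' : ℝ := max (1/2) (1 - ε/2) with ht'
    have ht'0 : (0:ℝ) < t' := lt_of_lt_of_le (by norm_num) (le_max_left _ _)
    have ht'1 : t' < 1 := by
      rw [ht']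
      apply max_lt (by norm_num) (by linarith)
    have ht'mem : t' ∈ Metric.ball (1:ℝ) ε := by
      rw [Metric.mem_ball, Real.dist_eq, abs_of_nonpos (by linarith), neg_sub]
      have hge : 1 - ε/2 ≤ t' := le_max_right _ _
      linarith
    have hball' := hball ht'mem
    simp only [Set.mem_setOf_eq, hG] at hball'
    exact core t' ht'0 ht'1 hball'
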